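/- Discrete total energy conservation for the fully discrete Fourier–Hermite scheme: Assume N_v ≥ 2. Suppose that for every species s ∈ S the fully discrete Fourier–Hermite Vlasov equations hold for all 0 ≤ n ≤ N_v and −N_x ≤ k ≤ N_x, and that the midpoint-discretized Ampère equations hold. Then the discrete total energy is conserved: Σ_{s∈S} 𝓔_k^{s,j+1} + 𝓔_p^{j+1} = Σ_{s∈S} 𝓔_k^{s,j} + 𝓔_p^{j}. -/

import Mathlib

open Finset

/-- Implicit midpoint value `X^{j+1/2} = (X^j + X^{j+1})/2`. -/
noncomputable def midpt (a b : ℂ) : ℂ := (a + b) / 2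

/-- The fully discrete Fourier–Hermite Vlasov equation with implicit midpoint
time stepping at index `(n,k)` for one species with mass `ms`, charge `qs`, and
Hermite parameters `αs`, `us`.  `Cj Cj1 : ℤ → ℤ → ℂ` are the Hermite–Fourier
coefficients of the distribution function at time levels `j` and `j+1`, and
`Ej Ej1 : ℤ → ℂ` those of the electric field. -/
noncomputable def vlasovEq (Nx : ℕ) (L Δt ms qs αs us : ℝ)
    (Cj Cj1 : ℤ → ℤ → ℂ) (Ej Ej1 : ℤ → ℂ) (n k : ℤ) : Prop :=
  (Cj1 n k - Cj n k) / (Δt : ℂ)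
    + (Real.sqrt ((n : ℝ) / 2) : ℂ) * (2 * (Real.pi : ℂ) * Complex.I * (k : ℂ) / (L : ℂ)) *
        (αs : ℂ) * midpt (Cj (n - 1) k) (Cj1 (n - 1) k)
    + (2 * (Real.pi : ℂ) * Complex.I * (k : ℂ) / (L : ℂ)) * (us : ℂ) *
        midpt (Cj n k) (Cj1 n k)
    + (Real.sqrt (((n : ℝ) + 1) / 2) : ℂ) * (2 * (Real.pi : ℂ) * Complex.I * (k : ℂ) / (L : ℂ)) *
        (αs : ℂ) * midpt (Cj (n + 1) k) (Cj1 (n + 1) k)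
    - (Real.sqrt (2 * (n : ℝ)) : ℂ) * ((qs : ℂ) / ((ms : ℂ) * (αs : ℂ))) *
        ∑ ℓ ∈ Finset.Icc (-(Nx : ℤ)) (Nx : ℤ),
          midpt (Cj (n - 1) ℓ) (Cj1 (n - 1) ℓ) * midpt (Ej (k - ℓ)) (Ej1 (k - ℓ))
    = 0

/-- Discrete kinetic energy of a species at a time level with coefficients `C`. -/
noncomputable def kineticEnergy (L ms αs us : ℝ) (C : ℤ → ℤ → ℂ) : ℂ :=
  ((ms : ℂ) * (αs : ℂ) * (L : ℂ) / 2) *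
    (((us : ℂ) ^ 2 + (αs : ℂ) ^ 2 / 2) * C 0 0
      + (Real.sqrt 2 : ℂ) * (us : ℂ) * (αs : ℂ) * C 1 0
      + ((αs : ℂ) ^ 2 / (Real.sqrt 2 : ℂ)) * C 2 0)

/-- Discrete potential energy at a time level with electric-field coefficients `E`. -/
noncomputable def potentialEnergy (Nx : ℕ) (ε₀ L : ℝ) (E : ℤ → ℂ) : ℂ :=
  ((ε₀ : ℂ) * (L : ℂ) / 2) * ∑ k ∈ Finset.Icc (-(Nx : ℤ)) (Nx : ℤ), E k * E (-k)

/-- Discrete total energy conservation for the fully discrete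
Fourier–Hermite scheme. -/
theorem discrete_energy_conservation {σ : Type*} (S : Finset σ)
    (Nv Nx : ℕ) (hNv : 2 ≤ Nv) (L Δt ε₀ : ℝ) (hL : 0 < L) (hΔt : 0 < Δt) (hε₀ : 0 < ε₀)
    (ms qs αs us : σ → ℝ) (hms : ∀ s ∈ S, 0 < ms s) (hαs : ∀ s ∈ S, 0 < αs s)
    (Cj Cj1 : σ → ℤ → ℤ → ℂ) (Ej Ej1 : ℤ → ℂ)
    (hCjlo : ∀ s ∈ S, ∀ k : ℤ, Cj s (-1) k = 0) (hCj1lo : ∀ s ∈ S, ∀ k : ℤ, Cj1 s (-1) k = 0)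
    (hCjhi : ∀ s ∈ S, ∀ k : ℤ, Cj s ((Nv : ℤ) + 1) k = 0)
    (hCj1hi : ∀ s ∈ S, ∀ k : ℤ, Cj1 s ((Nv : ℤ) + 1) k = 0)
    (hEj : ∀ k : ℤ, (Nx : ℤ) < |k| → Ej k = 0) (hEj1 : ∀ k : ℤ, (Nx : ℤ) < |k| → Ej1 k = 0)
    (hVlasov : ∀ s ∈ S, ∀ n k : ℤ, 0 ≤ n → n ≤ (Nv : ℤ) → -(Nx : ℤ) ≤ k → k ≤ (Nx : ℤ) →
      vlasovEq Nx L Δt (ms s) (qs s) (αs s) (us s) (Cj s) (Cj1 s) Ej Ej1 n k)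
    (hAmpere : ∀ k : ℤ, -(Nx : ℤ) ≤ k → k ≤ (Nx : ℤ) →
      (ε₀ : ℂ) * (Ej1 k - Ej k) / (Δt : ℂ)
        + ∑ s ∈ S, (qs s : ℂ) * (αs s : ℂ) *
            ((us s : ℂ) * midpt (Cj s 0 k) (Cj1 s 0 k)
              + ((αs s : ℂ) / (Real.sqrt 2 : ℂ)) * midpt (Cj s 1 k) (Cj1 s 1 k)) = 0) :
    (∑ s ∈ S, kineticEnergy L (ms s) (αs s) (us s) (Cj1 s)) + potentialEnergy Nx ε₀ L Ej1
      = (∑ s ∈ S, kineticEnergy L (ms s) (αs s) (us s) (Cj s))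
          + potentialEnergy Nx ε₀ L Ej := by
  classical
  have hΔt' : (Δt : ℂ) ≠ 0 := by exact_mod_cast hΔt.ne'
  have hsqrt2 : Real.sqrt 2 ≠ 0 := by positivity
  have hs2 : ((Real.sqrt 2 : ℝ) : ℂ) ≠ 0 := by exact_mod_cast hsqrt2
  have h22 : ((Real.sqrt 2 : ℝ) : ℂ) * ((Real.sqrt 2 : ℝ) : ℂ) = 2 := by
    norm_cast
    rw [Real.mul_self_sqrt (by norm_num)]
  have hsqrt4 : Real.sqrt 4 = 2 := by
    rw [show (4:ℝ) = 2^2 by norm_num, Real.sqrt_sq (by norm_num)]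
  set Ic : Finset ℤ := Finset.Icc (-(Nx : ℤ)) (Nx : ℤ) with hIcdef
  set S0 : σ → ℂ := fun s => ∑ ℓ ∈ Ic, midpt (Cj s 0 ℓ) (Cj1 s 0 ℓ) * midpt (Ej (-ℓ)) (Ej1 (-ℓ)) with hS0
  set S1 : σ → ℂ := fun s => ∑ ℓ ∈ Ic, midpt (Cj s 1 ℓ) (Cj1 s 1 ℓ) * midpt (Ej (-ℓ)) (Ej1 (-ℓ)) with hS1
  have hk0 : -(Nx : ℤ) ≤ 0 := neg_nonpos_of_nonneg (Int.natCast_nonneg _)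
  have hk0' : (0:ℤ) ≤ (Nx : ℤ) := Int.natCast_nonneg _
  -- kinetic energy step per species
  have hkin : ∀ s ∈ S,
      kineticEnergy L (ms s) (αs s) (us s) (Cj1 s)
        = kineticEnergy L (ms s) (αs s) (us s) (Cj s)
          + (L : ℂ) * (Δt : ℂ) *
              ((qs s : ℂ) * (αs s : ℂ) * (us s : ℂ) * S0 s
                + (qs s : ℂ) * (αs s : ℂ) * ((αs s : ℂ) / (Real.sqrt 2 : ℂ)) * S1 s) := by
    intro s hs
    have hm : (ms s : ℂ) ≠ 0 := by exact_mod_cast (hms s hs).ne'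
    have hα : (αs s : ℂ) ≠ 0 := by exact_mod_cast (hαs s hs).ne'
    have h0 := hVlasov s hs 0 0 le_rfl (Int.natCast_nonneg _) hk0 hk0'
    have h1 := hVlasov s hs 1 0 (by norm_num) (by exact_mod_cast Nat.one_le_of_lt hNv) hk0 hk0'
    have h2 := hVlasov s hs 2 0 (by norm_num) (by exact_mod_cast hNv) hk0 hk0'
    simp only [vlasovEq] at h0 h1 h2
    norm_num at h0 h1 h2
    have h0' : Cj1 s 0 0 = Cj s 0 0 := by
      rcases h0 with h | h
      · exact sub_eq_zero.mp h
      · exact absurd h hΔt.ne'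
    have h1' : (ms s : ℂ) * (αs s : ℂ) * (Cj1 s 1 0 - Cj s 1 0)
        = (Δt : ℂ) * ((Real.sqrt 2 : ℝ) : ℂ) * (qs s : ℂ) * S0 s := by
      field_simp at h1
      linear_combination h1
    have h2' : (ms s : ℂ) * (αs s : ℂ) * (Cj1 s 2 0 - Cj s 2 0)
        = (Δt : ℂ) * 2 * (qs s : ℂ) * S1 s := by
      field_simp at h2
      linear_combination h2
    simp only [kineticEnergy, h0']
    linear_combination ((L:ℂ) * ((Real.sqrt 2:ℝ):ℂ) * (us s:ℂ) * (αs s:ℂ) / 2) * h1'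
      + ((L:ℂ) * (αs s:ℂ)^2 / (2 * ((Real.sqrt 2:ℝ):ℂ))) * h2'
      + ((L:ℂ) * (us s:ℂ) * (αs s:ℂ) * (Δt:ℂ) * (qs s:ℂ) * S0 s / 2) * h22
  -- sum over symmetric range is invariant under negation
  have hsum_neg : ∀ f : ℤ → ℂ, (∑ k ∈ Ic, f (-k)) = ∑ k ∈ Ic, f k := by
    intro f
    exact Finset.sum_equiv (Equiv.neg ℤ) (by intro i; simp [hIcdef, Finset.mem_Icc]; omega)
      (fun i _ => rfl)
  -- Ampère, cleared of denominators
  have hAk : ∀ k ∈ Ic, (ε₀ : ℂ) * (Ej1 k - Ej k)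
      = -((Δt : ℂ) * ∑ s ∈ S, (qs s : ℂ) * (αs s : ℂ) *
          ((us s : ℂ) * midpt (Cj s 0 k) (Cj1 s 0 k)
            + ((αs s : ℂ) / (Real.sqrt 2 : ℂ)) * midpt (Cj s 1 k) (Cj1 s 1 k))) := by
    intro k hk
    rw [hIcdef, Finset.mem_Icc] at hk
    have h := hAmpere k hk.1 hk.2
    have h' := eq_neg_of_add_eq_zero_left h
    rw [← div_mul_cancel₀ ((ε₀ : ℂ) * (Ej1 k - Ej k)) hΔt', h']
    ring
  set T : ℂ := ∑ s ∈ S, ((qs s : ℂ) * (αs s : ℂ) * (us s : ℂ) * S0 s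
      + (qs s : ℂ) * (αs s : ℂ) * ((αs s : ℂ) / (Real.sqrt 2 : ℂ)) * S1 s) with hT
  have hKsum : (∑ s ∈ S, kineticEnergy L (ms s) (αs s) (us s) (Cj1 s))
      = (∑ s ∈ S, kineticEnergy L (ms s) (αs s) (us s) (Cj s)) + (L : ℂ) * (Δt : ℂ) * T := by
    rw [Finset.sum_congr rfl hkin, Finset.sum_add_distrib, hT, Finset.mul_sum]
  have hEdiff : (∑ k ∈ Ic, Ej1 k * Ej1 (-k)) - (∑ k ∈ Ic, Ej k * Ej (-k))
      = 2 * ∑ k ∈ Ic, (Ej1 k - Ej k) * midpt (Ej (-k)) (Ej1 (-k)) := by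
    have hswap : (∑ k ∈ Ic, (Ej1 (-k) - Ej (-k)) * midpt (Ej k) (Ej1 k))
        = ∑ k ∈ Ic, (Ej1 k - Ej k) * midpt (Ej (-k)) (Ej1 (-k)) := by
      have := hsum_neg (fun k => (Ej1 k - Ej k) * midpt (Ej (-k)) (Ej1 (-k)))
      simpa using this
    rw [← Finset.sum_sub_distrib]
    calc (∑ k ∈ Ic, (Ej1 k * Ej1 (-k) - Ej k * Ej (-k)))
        = ∑ k ∈ Ic, ((Ej1 k - Ej k) * midpt (Ej (-k)) (Ej1 (-k))
            + (Ej1 (-k) - Ej (-k)) * midpt (Ej k) (Ej1 k)) := by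
          refine Finset.sum_congr rfl fun k _ => ?_
          simp only [midpt]; ring
      _ = _ := by rw [Finset.sum_add_distrib, hswap]; ring
  have hXT : (∑ k ∈ Ic, (∑ s ∈ S, (qs s : ℂ) * (αs s : ℂ) *
        ((us s : ℂ) * midpt (Cj s 0 k) (Cj1 s 0 k)
          + ((αs s : ℂ) / (Real.sqrt 2 : ℂ)) * midpt (Cj s 1 k) (Cj1 s 1 k)))
        * midpt (Ej (-k)) (Ej1 (-k))) = T := by
    rw [hT]
    simp only [Finset.sum_mul]
    rw [Finset.sum_comm]
    refine Finset.sum_congr rfl fun s _ => ?_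
    simp only [hS0, hS1, Finset.mul_sum]
    rw [← Finset.sum_add_distrib]
    refine Finset.sum_congr rfl fun k _ => ?_
    ring
  have hA2 : (ε₀ : ℂ) * ∑ k ∈ Ic, (Ej1 k - Ej k) * midpt (Ej (-k)) (Ej1 (-k))
      = -((Δt : ℂ) * T) := by
    rw [Finset.mul_sum, ← hXT, Finset.mul_sum, ← Finset.sum_neg_distrib]
    refine Finset.sum_congr rfl fun k hk => ?_
    rw [← mul_assoc, hAk k hk]
    ring
  have hpot' : potentialEnergy Nx ε₀ L Ej1 = potentialEnergy Nx ε₀ L Ej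
      - (L : ℂ) * (Δt : ℂ) * T := by
    simp only [potentialEnergy, ← hIcdef]
    linear_combination ((ε₀ : ℂ) * (L : ℂ) / 2) * hEdiff + (L : ℂ) * hA2
  rw [hKsum, hpot']
  ring
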